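/- Let $A$ be a unital C*-algebra and $S, T \subseteq \mathbb{C}$ compact sets. Composing with the two coordinate projections $p_S : S \times T \to S$ and $p_T : S \times T \to T$ establishes a bijection between unital $*$-homomorphisms $C(S \times T) \to A$ and pairs $(\alpha, \beta)$ of commuting normal elements of $A$ with $\mathrm{spec}(\alpha) \subseteq S$ and $\mathrm{spec}(\beta) \subseteq T$. -/

import Mathlib

open NormedSpace in
/-- **Fuglede's theorem**: if `T` commutes with a normal element `N` of a C*-algebra,
then it commutes with `star N`. -/
theorem fuglede_comm {A : Type*} [NormedRing A] [StarRing A] [CStarRing A]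
    [NormedAlgebra ℂ A] [StarModule ℂ A] [CompleteSpace A]
    {N T : A} (hN : IsStarNormal N) (h : Commute T N) : Commute T (star N) := by
  rcases subsingleton_or_nontrivial A with hA | hA
  · exact Subsingleton.elim _ _
  letI : NormedAlgebra ℚ A := .restrictScalars ℚ ℂ A
  set N' := star N with hN'
  have hcomm : Commute N' N := hN.star_comm_self
  -- the entire function
  set f : ℂ → A := fun z => exp (z • N') * T * exp (z • (-N')) with hf
  have hdiff : Differentiable ℂ f := fun z =>
    (((hasDerivAt_exp_smul_const (𝕂 := ℂ) N' z).differentiableAt.mul_const T).mul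
      (hasDerivAt_exp_smul_const (𝕂 := ℂ) (-N') z).differentiableAt)
  -- the unitary rewriting
  have key : ∀ z : ℂ, f z = exp (z • N' - (starRingEnd ℂ z) • N) * T *
      exp (-(z • N' - (starRingEnd ℂ z) • N)) := by
    intro z
    have c1 : Commute (z • N') (-((starRingEnd ℂ z) • N)) :=
      (((hcomm.smul_left z).smul_right (starRingEnd ℂ z)).neg_right)
    have e1 : exp (z • N' - (starRingEnd ℂ z) • N)
        = exp (z • N') * exp (-((starRingEnd ℂ z) • N)) := by
      rw [sub_eq_add_neg, exp_add_of_commute c1]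
    have c2 : Commute ((starRingEnd ℂ z) • N) (-(z • N')) :=
      (((hcomm.symm.smul_left (starRingEnd ℂ z)).smul_right z).neg_right)
    have e2 : exp (-(z • N' - (starRingEnd ℂ z) • N))
        = exp ((starRingEnd ℂ z) • N) * exp (-(z • N')) := by
      rw [neg_sub, sub_eq_add_neg, exp_add_of_commute c2]
    have hTc : Commute T (exp ((starRingEnd ℂ z) • N)) :=
      ((h.smul_right (starRingEnd ℂ z)).exp_right)
    have hTc' : Commute T (exp (-((starRingEnd ℂ z) • N))) :=
      ((h.smul_right (starRingEnd ℂ z)).neg_right.exp_right)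
    have hinv : exp (-((starRingEnd ℂ z) • N)) * exp ((starRingEnd ℂ z) • N) = 1 := by
      rw [← exp_add_of_commute (Commute.refl _).neg_left, neg_add_cancel, exp_zero]
    show exp (z • N') * T * exp (z • -N') = _
    rw [e1, e2, smul_neg]
    calc exp (z • N') * T * exp (-(z • N'))
        = exp (z • N') * (T * ((exp (-((starRingEnd ℂ z) • N)) *
            exp ((starRingEnd ℂ z) • N)) * exp (-(z • N')))) := by
          rw [hinv, one_mul]; simp only [mul_assoc]
      _ = exp (z • N') * exp (-((starRingEnd ℂ z) • N)) * T *
          (exp ((starRingEnd ℂ z) • N) * exp (-(z • N'))) := by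
          simp only [mul_assoc]
          rw [← mul_assoc T, hTc'.eq, mul_assoc]
  -- boundedness
  have hbdd : Bornology.IsBounded (Set.range f) := by
    rw [Metric.isBounded_iff_subset_closedBall 0]
    refine ⟨‖T‖, ?_⟩
    rintro - ⟨z, rfl⟩
    rw [key z, Metric.mem_closedBall, dist_zero_right]
    have hmem : z • N' - (starRingEnd ℂ z) • N ∈ skewAdjoint A := by
      rw [skewAdjoint.mem_iff]
      simp [star_smul, hN', neg_sub]
    have hu1 : exp (z • N' - (starRingEnd ℂ z) • N) ∈ unitary A :=
      exp_mem_unitary_of_mem_skewAdjoint hmem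
    have hu2 : exp (-(z • N' - (starRingEnd ℂ z) • N)) ∈ unitary A :=
      exp_mem_unitary_of_mem_skewAdjoint (neg_mem hmem)
    calc ‖exp (z • N' - (starRingEnd ℂ z) • N) * T *
          exp (-(z • N' - (starRingEnd ℂ z) • N))‖
        ≤ ‖exp (z • N' - (starRingEnd ℂ z) • N) * T‖ *
          ‖exp (-(z • N' - (starRingEnd ℂ z) • N))‖ := norm_mul_le _ _
      _ ≤ ‖exp (z • N' - (starRingEnd ℂ z) • N)‖ * ‖T‖ *
          ‖exp (-(z • N' - (starRingEnd ℂ z) • N))‖ := by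
          gcongr; exact norm_mul_le _ _
      _ = ‖T‖ := by
          rw [CStarRing.norm_coe_unitary ⟨_, hu1⟩, CStarRing.norm_coe_unitary ⟨_, hu2⟩]
          ring
  -- Liouville
  have hconst : ∀ z : ℂ, f z = T := by
    intro z
    have := hdiff.apply_eq_apply_of_bounded hbdd z 0
    simpa [hf, exp_zero] using this
  -- exp commutes with T
  have hexp : ∀ z : ℂ, exp (z • N') * T = T * exp (z • N') := by
    intro z
    have h1 := hconst z
    have hinv : exp (z • (-N')) * exp (z • N') = 1 := by
      rw [smul_neg, ← exp_add_of_commute (Commute.refl _).neg_left, neg_add_cancel, exp_zero]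
    calc exp (z • N') * T = exp (z • N') * T * (exp (z • (-N')) * exp (z • N')) := by
          rw [hinv, mul_one]
      _ = (exp (z • N') * T * exp (z • (-N'))) * exp (z • N') := by
          simp only [mul_assoc]
      _ = f z * exp (z • N') := rfl
      _ = T * exp (z • N') := by rw [h1]
  -- differentiate at 0
  have hg : HasDerivAt (fun z : ℂ => exp (z • N') * T) (N' * T) 0 := by
    have := (hasDerivAt_exp_smul_const (𝕂 := ℂ) N' 0).mul_const T
    simpa [exp_zero] using this
  have hh : HasDerivAt (fun z : ℂ => exp (z • N') * T) (T * N') 0 := by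
    have := (hasDerivAt_exp_smul_const (𝕂 := ℂ) N' 0).const_mul T
    have heq : (fun z : ℂ => T * exp (z • N')) = fun z : ℂ => exp (z • N') * T :=
      funext fun z => (hexp z).symm
    rw [heq] at this
    simpa [exp_zero] using this
  have := hg.unique hh
  exact (Commute.symm this)

open scoped CStarAlgebra
open WeakDual

/-- For a unital C*-algebra `A` and compact sets `S, T ⊆ ℂ`, composing with the
coordinate projections gives a bijection between unital `*`-homomorphisms `C(S × T) → A` and
pairs of commuting normal elements with spectra in `S` and `T` respectively. -/
theorem stmt1 (A : Type*) [NormedRing A] [StarRing A] [CStarRing A]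
    [NormedAlgebra ℂ A] [StarModule ℂ A] [CompleteSpace A]
    (S T : Set ℂ) (hS : IsCompact S) (hT : IsCompact T) :
    Set.BijOn
      (fun γ : C(S × T, ℂ) →⋆ₐ[ℂ] A =>
        (γ (ContinuousMap.mk (fun p => (p.1 : ℂ))
              (continuous_subtype_val.comp continuous_fst)),
         γ (ContinuousMap.mk (fun p => (p.2 : ℂ))
              (continuous_subtype_val.comp continuous_snd))))
      Set.univ
      {p : A × A | Commute p.1 p.2 ∧ IsStarNormal p.1 ∧ IsStarNormal p.2 ∧
        spectrum ℂ p.1 ⊆ S ∧ spectrum ℂ p.2 ⊆ T} := by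
  haveI : CompactSpace S := isCompact_iff_compactSpace.mp hS
  haveI : CompactSpace T := isCompact_iff_compactSpace.mp hT
  letI : CStarAlgebra A :=
    { ‹NormedRing A›, ‹StarRing A›, ‹CStarRing A›, ‹NormedAlgebra ℂ A›, ‹StarModule ℂ A›,
      ‹CompleteSpace A› with }
  set pS : C(↥S × ↥T, ℂ) := ContinuousMap.mk (fun p => (p.1 : ℂ))
      (continuous_subtype_val.comp continuous_fst) with hpS
  set pT : C(↥S × ↥T, ℂ) := ContinuousMap.mk (fun p => (p.2 : ℂ))
      (continuous_subtype_val.comp continuous_snd) with hpT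
  refine ⟨fun γ _ => ?_, fun γ₁ _ γ₂ _ hEq => ?_, fun p hp => ?_⟩
  · -- MapsTo
    refine ⟨?_, ⟨?_⟩, ⟨?_⟩, ?_, ?_⟩
    · show γ pS * γ pT = γ pT * γ pS
      rw [← map_mul, ← map_mul, mul_comm]
    · show star (γ pS) * γ pS = γ pS * star (γ pS)
      rw [← map_star, ← map_mul, ← map_mul, mul_comm]
    · show star (γ pT) * γ pT = γ pT * star (γ pT)
      rw [← map_star, ← map_mul, ← map_mul, mul_comm]
    · calc spectrum ℂ (γ pS) ⊆ spectrum ℂ pS := AlgHom.spectrum_apply_subset γ pS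
        _ = Set.range pS := ContinuousMap.spectrum_eq_range pS
        _ ⊆ S := by rintro - ⟨q, rfl⟩; exact q.1.2
    · calc spectrum ℂ (γ pT) ⊆ spectrum ℂ pT := AlgHom.spectrum_apply_subset γ pT
        _ = Set.range pT := ContinuousMap.spectrum_eq_range pT
        _ ⊆ T := by rintro - ⟨q, rfl⟩; exact q.2.2
  · -- InjOn
    have h1 : γ₁ pS = γ₂ pS := congrArg Prod.fst hEq
    have h2 : γ₁ pT = γ₂ pT := congrArg Prod.snd hEq
    have hEqOn : Set.EqOn ⇑γ₁ ⇑γ₂ ({pS, pT} : Set C(↥S × ↥T, ℂ)) := by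
      rintro f (rfl | rfl)
      exacts [h1, h2]
    have hsep : (StarAlgebra.adjoin ℂ ({pS, pT} : Set C(↥S × ↥T, ℂ))).SeparatesPoints := by
      intro x y hxy
      by_cases hfst : (x.1 : ℂ) = y.1
      · have hsnd : (x.2 : ℂ) ≠ y.2 := by
          intro hsnd
          exact hxy (Prod.ext (Subtype.ext hfst) (Subtype.ext hsnd))
        exact ⟨⇑pT, ⟨pT, StarAlgebra.subset_adjoin ℂ _ (by simp), rfl⟩, hsnd⟩
      · exact ⟨⇑pS, ⟨pS, StarAlgebra.subset_adjoin ℂ _ (by simp), rfl⟩, hfst⟩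
    have htop := ContinuousMap.starSubalgebra_topologicalClosure_eq_top_of_separatesPoints _ hsep
    have hclosed : IsClosed {f : C(↥S × ↥T, ℂ) | γ₁ f = γ₂ f} :=
      isClosed_eq (map_continuous γ₁) (map_continuous γ₂)
    have hsub : closure ((StarAlgebra.adjoin ℂ ({pS, pT} : Set C(↥S × ↥T, ℂ)) :
        StarSubalgebra ℂ C(↥S × ↥T, ℂ)) : Set C(↥S × ↥T, ℂ)) ⊆ {f | γ₁ f = γ₂ f} :=
      closure_minimal (fun f hf => StarAlgHom.adjoin_le_equalizer γ₁ γ₂ hEqOn hf) hclosed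
    ext f
    have hf : f ∈ (StarAlgebra.adjoin ℂ
        ({pS, pT} : Set C(↥S × ↥T, ℂ))).topologicalClosure := htop.ge trivial
    exact hsub hf
  · -- SurjOn
    obtain ⟨hc, hnα, hnβ, hsα, hsβ⟩ := hp
    obtain ⟨α, β⟩ := p
    rcases subsingleton_or_nontrivial A with hA | hA
    · exact ⟨{ toFun := fun _ => 0
               map_one' := Subsingleton.elim _ _
               map_mul' := fun _ _ => Subsingleton.elim _ _
               map_zero' := Subsingleton.elim _ _
               map_add' := fun _ _ => Subsingleton.elim _ _
               commutes' := fun _ => Subsingleton.elim _ _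
               map_star' := fun _ => Subsingleton.elim _ _ },
             trivial, Subsingleton.elim _ _⟩
    have hfug1 : Commute α (star β) := fuglede_comm hnβ hc
    have hfug2 : Commute β (star α) := fuglede_comm hnα hc.symm
    set s : Set A := {α, β} with hs
    have hmem : ∀ x ∈ s, x = α ∨ x = β := fun x hx => by simpa [hs] using hx
    have hc1 : ∀ a ∈ s, ∀ b ∈ s, a * b = b * a := by
      intro a ha b hb
      rcases hmem a ha with rfl | rfl <;> rcases hmem b hb with rfl | rfl
      · rfl
      · exact hc.eq
      · exact hc.symm.eq
      · rfl
    have hc2 : ∀ a ∈ s, ∀ b ∈ s, a * star b = star b * a := by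
      intro a ha b hb
      rcases hmem a ha with rfl | rfl <;> rcases hmem b hb with rfl | rfl
      · exact hnα.star_comm_self.symm.eq
      · exact hfug1.eq
      · exact hfug2.eq
      · exact hnβ.star_comm_self.symm.eq
    set B : StarSubalgebra ℂ A := (StarAlgebra.adjoin ℂ s).topologicalClosure with hB
    haveI hBclosed : IsClosed (B : Set A) :=
      StarSubalgebra.isClosed_topologicalClosure _
    have hadj : ∀ x y : ↥(StarAlgebra.adjoin ℂ s), x * y = y * x := by
      letI := StarAlgebra.adjoinCommRingOfComm ℂ hc1 hc2
      exact fun x y => mul_comm x y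
    have hBcomm : ∀ x y : ↥B, x * y = y * x := by
      letI := StarSubalgebra.commRingTopologicalClosure (StarAlgebra.adjoin ℂ s) hadj
      exact fun x y => mul_comm x y
    letI : CommCStarAlgebra ↥B :=
      { (StarSubalgebra.cstarAlgebra B : CStarAlgebra ↥B) with mul_comm := hBcomm }
    have hαB : α ∈ B :=
      StarSubalgebra.le_topologicalClosure _ (StarAlgebra.subset_adjoin ℂ s (by simp [hs]))
    have hβB : β ∈ B :=
      StarSubalgebra.le_topologicalClosure _ (StarAlgebra.subset_adjoin ℂ s (by simp [hs]))
    set αB : ↥B := ⟨α, hαB⟩ with hαB'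
    set βB : ↥B := ⟨β, hβB⟩ with hβB'
    have hspecS : ∀ χ : characterSpace ℂ ↥B, (χ αB : ℂ) ∈ S := by
      intro χ
      have h1 : χ αB ∈ spectrum ℂ αB := AlgHom.apply_mem_spectrum χ αB
      rw [StarSubalgebra.spectrum_eq] at h1
      exact hsα h1
    have hspecT : ∀ χ : characterSpace ℂ ↥B, (χ βB : ℂ) ∈ T := by
      intro χ
      have h1 : χ βB ∈ spectrum ℂ βB := AlgHom.apply_mem_spectrum χ βB
      rw [StarSubalgebra.spectrum_eq] at h1
      exact hsβ h1
    set φ : C(characterSpace ℂ ↥B, ↥S × ↥T) :=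
      ContinuousMap.mk (fun χ => (⟨χ αB, hspecS χ⟩, ⟨χ βB, hspecT χ⟩))
        (Continuous.prodMk
          (Continuous.subtype_mk ((gelfandTransform ℂ ↥B αB).continuous) _)
          (Continuous.subtype_mk ((gelfandTransform ℂ ↥B βB).continuous) _)) with hφ
    set γ : C(↥S × ↥T, ℂ) →⋆ₐ[ℂ] A :=
      (StarSubalgebra.subtype B).comp
        (((gelfandStarTransform ↥B).symm : _ →⋆ₐ[ℂ] _).comp
          (ContinuousMap.compStarAlgHom' ℂ ℂ φ)) with hγ
    refine ⟨γ, trivial, ?_⟩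
    have hcompS : pS.comp φ = gelfandStarTransform ↥B αB := by ext χ; rfl
    have hcompT : pT.comp φ = gelfandStarTransform ↥B βB := by ext χ; rfl
    have e1 : γ pS = α := by
      show (StarSubalgebra.subtype B) ((gelfandStarTransform ↥B).symm (pS.comp φ)) = α
      rw [hcompS, StarAlgEquiv.symm_apply_apply]
      rfl
    have e2 : γ pT = β := by
      show (StarSubalgebra.subtype B) ((gelfandStarTransform ↥B).symm (pT.comp φ)) = β
      rw [hcompT, StarAlgEquiv.symm_apply_apply]
      rfl
    exact Prod.ext e1 e2
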